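/- Let p = 239 and define f(i) = (1/4)·((1/p)·((p + (−1)^i·p)/2 − i)² − 1) for i ∈ {0,...,238}. Then for every unit u ∈ (ℤ/239ℤ)× and every ε ∈ {±1}, there exists i such that ε·M_Q(u·i·g) − f(i) is either not an even integer or is positive, where Q = [[17,-4],[-4,15]] and g = (0,1)ᵗ generates ℤ²/Qℤ². -/

import Mathlib

set_option maxRecDepth 8000

lemma inv_QQ : (!![17, -4; -4, 15] : Matrix (Fin 2) (Fin 2) ℚ)⁻¹ =
    !![15/239, 4/239; 4/239, 17/239] := by
  apply Matrix.inv_eq_right_inv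
  ext i j
  fin_cases i <;> fin_cases j <;>
    simp [Matrix.mul_apply, Fin.sum_univ_two] <;> norm_num

lemma mem_S_rep (c : ℕ) (m : ℚ)
    (h : ∃ ξ : Fin 2 → ℤ, Odd (ξ 0) ∧ Odd (ξ 1) ∧
      Submodule.Quotient.mk ξ =
        (c • (Submodule.Quotient.mk (![0, 1] : Fin 2 → ℤ) :
          (Fin 2 → ℤ) ⧸ LinearMap.range
            (Matrix.toLin' (!![17, -4; -4, 15] : Matrix (Fin 2) (Fin 2) ℤ)))) ∧
      m = (dotProduct (fun j => (ξ j : ℚ))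
        ((!![17, -4; -4, 15] : Matrix (Fin 2) (Fin 2) ℚ)⁻¹.mulVec fun j => (ξ j : ℚ)) - 2) / 4) :
    ∃ x0 x1 A B : ℤ, Odd A ∧ Odd B ∧ A = 17*x0 - 4*x1 ∧ B = -4*x0 + 15*x1 + (c:ℤ) ∧
      m = (((15*A^2 + 8*A*B + 17*B^2 : ℤ) : ℚ) - 478) / 956 := by
  obtain ⟨ξ, h0, h1, hcl, hq⟩ := h
  rw [show (c • (Submodule.Quotient.mk (![0, 1] : Fin 2 → ℤ) :
        (Fin 2 → ℤ) ⧸ LinearMap.range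
          (Matrix.toLin' (!![17, -4; -4, 15] : Matrix (Fin 2) (Fin 2) ℤ)))) =
      Submodule.Quotient.mk ((c : ℤ) • (![0, 1] : Fin 2 → ℤ)) by
        rw [Submodule.Quotient.mk_smul, Nat.cast_smul_eq_nsmul]] at hcl
  rw [Submodule.Quotient.eq] at hcl
  obtain ⟨x, hx⟩ := hcl
  have hx0 := congrFun hx 0
  have hx1 := congrFun hx 1
  simp [Matrix.toLin'_apply, Matrix.mulVec, dotProduct, Fin.sum_univ_two] at hx0 hx1
  rw [inv_QQ] at hq
  refine ⟨x 0, x 1, ξ 0, ξ 1, h0, h1, by linarith, by linarith, ?_⟩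
  simp [Matrix.mulVec, dotProduct, Fin.sum_univ_two] at hq
  rw [hq]; push_cast; ring

lemma no_sol : ∀ w : ZMod 239, 17 * w^2 ≠ 238 := by decide

theorem obstruction_fails_for_P13_4_11 :
    let Q : Matrix (Fin 2) (Fin 2) ℤ := !![17, -4; -4, 15]
    let Qq : Matrix (Fin 2) (Fin 2) ℚ := !![17, -4; -4, 15]
    let G := (Fin 2 → ℤ) ⧸ LinearMap.range (Matrix.toLin' Q)
    let g : G := Submodule.Quotient.mk (![0, 1] : Fin 2 → ℤ)
    let S : G → Set ℚ := fun α =>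
      {q | ∃ ξ : Fin 2 → ℤ, Odd (ξ 0) ∧ Odd (ξ 1) ∧ Submodule.Quotient.mk ξ = α ∧
        q = (dotProduct (fun j => (ξ j : ℚ)) (Qq⁻¹.mulVec fun j => (ξ j : ℚ)) - 2) / 4}
    let f : ℕ → ℚ := fun i =>
      (1 / 4) * ((1 / 239) * ((239 + (-1 : ℚ) ^ i * 239) / 2 - (i : ℚ)) ^ 2 - 1)
    ∀ u : (ZMod 239)ˣ, ∀ ε : ℤ, (ε = 1 ∨ ε = -1) →
      ∃ i : ℕ, i < 239 ∧ ∀ m : ℚ,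
        IsLeast (S ((((u : ZMod 239) * (i : ZMod 239)).val) • g)) m →
        (¬ ∃ k : ℤ, (ε : ℚ) * m - f i = 2 * (k : ℚ)) ∨ 0 < (ε : ℚ) * m - f i := by
  intro Q Qq G g S f u ε hε
  by_cases hcase : ε = 1 ∧ (u : ZMod 239)^2 = 225
  · -- positivity branch with i = 238
    obtain ⟨hε1, hsq⟩ := hcase
    refine ⟨238, by norm_num, ?_⟩
    intro m hm
    right
    have hrep := mem_S_rep (((u : ZMod 239) * ((238:ℕ) : ZMod 239)).val) m hm.1
    obtain ⟨x0, x1, A, B, hAo, hBo, hA, hB, hmval⟩ := hrep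
    -- determine c
    have hsol : ∀ w : ZMod 239, w^2 = 225 → w = 15 ∨ w = 224 := by decide
    have hu := hsol _ hsq
    have hc : (((u : ZMod 239) * ((238:ℕ) : ZMod 239)).val : ℤ) = 224 ∨
        (((u : ZMod 239) * ((238:ℕ) : ZMod 239)).val : ℤ) = 15 := by
      rcases hu with h | h <;> rw [h]
      · left; norm_cast
      · right; norm_cast
    -- show N > 240
    have hN : 240 < 15*A^2 + 8*A*B + 17*B^2 := by
      by_contra hle
      push_neg at hle
      have hbnd : 11*A^2 + 13*B^2 ≤ 240 := by nlinarith [sq_nonneg (A + B)]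
      have hA4 : -4 ≤ A ∧ A ≤ 4 := by constructor <;> nlinarith [sq_nonneg B]
      have hB4 : -4 ≤ B ∧ B ≤ 4 := by constructor <;> nlinarith [sq_nonneg A]
      have hAodd : A % 2 = 1 := Int.odd_iff.mp hAo
      have hBodd : B % 2 = 1 := Int.odd_iff.mp hBo
      obtain ⟨hA1, hA2⟩ := hA4
      obtain ⟨hB1, hB2⟩ := hB4
      rcases hc with h | h <;> rw [h] at hB <;>
        (interval_cases A <;> interval_cases B <;> omega)
    -- conclude positivity
    have hf : f 238 = -119/478 := by
      simp only [f]
      norm_num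
    rw [hf, hmval, hε1]
    have : (240 : ℚ) < ((15*A^2 + 8*A*B + 17*B^2 : ℤ) : ℚ) := by exact_mod_cast hN
    push_cast
    push_cast at this
    nlinarith [this]
  · -- parity branch with i = 1
    refine ⟨1, by norm_num, ?_⟩
    intro m hm
    left
    rintro ⟨k, hk⟩
    have hrep := mem_S_rep (((u : ZMod 239) * ((1:ℕ) : ZMod 239)).val) m hm.1
    obtain ⟨x0, x1, A, B, hAo, hBo, hA, hB, hmval⟩ := hrep
    set c : ℤ := ((((u : ZMod 239) * ((1:ℕ) : ZMod 239)).val : ℕ) : ℤ) with hcdef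
    have hkey : 15*A^2 + 8*A*B + 17*B^2 =
        17*c^2 + 239*(17*x0^2 + 15*x1^2 - 8*x0*x1 + 2*x1*c) := by
      rw [hA, hB]; ring
    have hf : f 1 = -119/478 := by
      simp only [f]; norm_num
    rw [hf, hmval] at hk
    have hcu : ((c : ZMod 239)) = (u : ZMod 239) := by
      rw [hcdef]
      push_cast
      rw [ZMod.natCast_val, ZMod.cast_id]
      norm_num
    rcases hε with hε1 | hε1 <;> rw [hε1] at hk
    · -- ε = 1 : 239 ∣ 17 c^2 - 1, so 17 u^2 = 1 hence u^2 = 225, contradiction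
      have hZ : (((15*A^2 + 8*A*B + 17*B^2 : ℤ)) : ℚ) = 240 + 1912 * (k : ℚ) := by
        push_cast at hk ⊢
        linarith [hk]
      have hZ' : (15*A^2 + 8*A*B + 17*B^2 : ℤ) = 240 + 1912 * k := by
        exact_mod_cast hZ
      have hdvd : (239 : ℤ) ∣ 17*c^2 - 1 :=
        ⟨1 + 8*k - (17*x0^2 + 15*x1^2 - 8*x0*x1 + 2*x1*c), by linarith [hkey, hZ']⟩
      have h0 : ((17*c^2 - 1 : ℤ) : ZMod 239) = 0 :=
        (ZMod.intCast_zmod_eq_zero_iff_dvd _ _).mpr hdvd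
      push_cast at h0
      rw [hcu] at h0
      have h17 : 17 * (u : ZMod 239)^2 = 1 := by linear_combination h0
      have h225 : ∀ w : ZMod 239, 17 * w^2 = 1 → w^2 = 225 := by decide
      exact hcase ⟨hε1, h225 _ h17⟩
    · -- ε = -1 : 239 ∣ 17 c^2 + 1, so 17 u^2 = 238, impossible
      have hZ : (((15*A^2 + 8*A*B + 17*B^2 : ℤ)) : ℚ) = 716 - 1912 * (k : ℚ) := by
        push_cast at hk ⊢
        linarith [hk]
      have hZ' : (15*A^2 + 8*A*B + 17*B^2 : ℤ) = 716 - 1912 * k := by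
        exact_mod_cast hZ
      have hdvd : (239 : ℤ) ∣ 17*c^2 + 1 :=
        ⟨3 - 8*k - (17*x0^2 + 15*x1^2 - 8*x0*x1 + 2*x1*c), by linarith [hkey, hZ']⟩
      have h0 : ((17*c^2 + 1 : ℤ) : ZMod 239) = 0 :=
        (ZMod.intCast_zmod_eq_zero_iff_dvd _ _).mpr hdvd
      push_cast at h0
      rw [hcu] at h0
      have h17 : 17 * (u : ZMod 239)^2 = 238 := by
        have h238 : (238 : ZMod 239) = -1 := by decide
        rw [h238]; linear_combination h0
      exact no_sol _ h17
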